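/- For every integer n ≥ 4 and every φ ∈ [π/4, π/2), |W'(φ)/W(φ)| < 4/5, where W(φ) = S_n/4 + cos φ/√(1 + n sin²φ) and S_n = Σ_{k=1}^{n-1} csc(πk/n). -/

import Mathlib

open Real Finset

noncomputable def Ssum (n : ℕ) : ℝ := ∑ k ∈ Finset.Icc 1 (n - 1), 1 / Real.sin (π * k / n)

noncomputable def Wpyr (n : ℕ) (φ : ℝ) : ℝ :=
  Ssum n / 4 + Real.cos φ / Real.sqrt (1 + n * Real.sin φ ^ 2)

lemma Ssum_ge (n : ℕ) (hn : 2 ≤ n) : ((n : ℝ) - 1) ≤ Ssum n := by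
  have hterm : ∀ k ∈ Finset.Icc 1 (n - 1), (1 : ℝ) ≤ 1 / Real.sin (π * k / n) := by
    intro k hk
    rw [Finset.mem_Icc] at hk
    have hn0 : (0 : ℝ) < n := by positivity
    have hk1 : (1 : ℝ) ≤ k := by exact_mod_cast hk.1
    have hklt : (k : ℝ) < n := by
      have : k < n := lt_of_le_of_lt hk.2 (Nat.sub_lt (by omega) one_pos)
      exact_mod_cast this
    have hpos : 0 < π * k / n := by
      have := pi_pos; positivity
    have hlt : π * k / n < π := by
      rw [div_lt_iff₀ hn0]; nlinarith [pi_pos]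
    have hsin : 0 < Real.sin (π * k / n) := Real.sin_pos_of_pos_of_lt_pi hpos hlt
    rw [le_div_iff₀ hsin]
    simpa using Real.sin_le_one (π * k / n)
  have h := Finset.card_nsmul_le_sum (Finset.Icc 1 (n - 1)) _ 1 hterm
  rw [Nat.card_Icc] at h
  simp only [nsmul_eq_mul, mul_one] at h
  have hcast : ((n - 1 + 1 - 1 : ℕ) : ℝ) = (n : ℝ) - 1 := by
    have : n - 1 + 1 - 1 = n - 1 := by omega
    rw [this, Nat.cast_sub (by omega)]; norm_num
  rw [hcast] at h
  exact h

lemma Ssum_four : Ssum 4 = 1 + 2 * Real.sqrt 2 := by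
  have h1 : Finset.Icc 1 (4 - 1) = ({1, 2, 3} : Finset ℕ) := by decide
  rw [Ssum, h1]
  rw [Finset.sum_insert (by decide), Finset.sum_insert (by decide), Finset.sum_singleton]
  push_cast
  have e1 : π * 1 / 4 = π / 4 := by ring
  have e2 : π * 2 / 4 = π / 2 := by ring
  have e3 : π * 3 / 4 = π - π / 4 := by ring
  rw [e1, e2, e3, Real.sin_pi_sub, Real.sin_pi_div_four, Real.sin_pi_div_two]
  have h22 : Real.sqrt 2 * Real.sqrt 2 = 2 := Real.mul_self_sqrt (by norm_num)
  have hne : Real.sqrt 2 ≠ 0 := by positivity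
  field_simp
  nlinarith [h22, Real.sqrt_nonneg 2]

lemma wpyr_hasDerivAt (n : ℕ) (φ : ℝ) :
    HasDerivAt (Wpyr n)
      (-(((n : ℝ) + 1) * Real.sin φ) /
        ((1 + n * Real.sin φ ^ 2) * Real.sqrt (1 + n * Real.sin φ ^ 2))) φ := by
  have hu : (0 : ℝ) < 1 + n * Real.sin φ ^ 2 := by positivity
  have hD : (0 : ℝ) < Real.sqrt (1 + n * Real.sin φ ^ 2) := Real.sqrt_pos.mpr hu
  have hu' : HasDerivAt (fun x : ℝ => 1 + (n : ℝ) * Real.sin x ^ 2)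
      ((n : ℝ) * ((2 : ℕ) * Real.sin φ ^ 1 * Real.cos φ)) φ :=
    (((Real.hasDerivAt_sin φ).pow 2).const_mul (n : ℝ)).const_add 1
  have hsq : HasDerivAt (fun x : ℝ => Real.sqrt (1 + (n : ℝ) * Real.sin x ^ 2))
      ((n : ℝ) * ((2 : ℕ) * Real.sin φ ^ 1 * Real.cos φ) /
        (2 * Real.sqrt (1 + n * Real.sin φ ^ 2))) φ := hu'.sqrt hu.ne'
  have hdiv := (Real.hasDerivAt_cos φ).div hsq hD.ne'
  have := hdiv.const_add (Ssum n / 4)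
  refine this.congr_deriv (Eq.symm ?_)
  have hD2 : Real.sqrt (1 + n * Real.sin φ ^ 2) ^ 2 = 1 + n * Real.sin φ ^ 2 :=
    Real.sq_sqrt hu.le
  have hsc : Real.sin φ ^ 2 + Real.cos φ ^ 2 = 1 := Real.sin_sq_add_cos_sq φ
  field_simp
  linear_combination (2*Real.sin φ*((1 + n*Real.sin φ^2) - n - 1))*hD2 +
    (2*Real.sin φ*(n:ℝ)*(1 + n*Real.sin φ^2))*hsc

set_option maxHeartbeats 1000000 in
theorem ratio_lt (n : ℕ) (hn : 4 ≤ n) (φ : ℝ) (hφ : φ ∈ Set.Ico (π / 4) (π / 2)) :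
    |deriv (Wpyr n) φ / Wpyr n φ| < 4 / 5 := by
  obtain ⟨h1, h2⟩ := hφ
  have hπ := pi_pos
  have hmemφ : φ ∈ Set.Icc (-(π / 2)) (π / 2) := ⟨by linarith, h2.le⟩
  have hs1 : Real.sqrt 2 / 2 ≤ Real.sin φ := by
    have := Real.strictMonoOn_sin.monotoneOn (a := π / 4) (b := φ)
      ⟨by linarith, by linarith⟩ hmemφ h1
    rwa [Real.sin_pi_div_four] at this
  have hs2 : Real.sin φ < 1 := by
    have := Real.strictMonoOn_sin (a := φ) (b := π / 2) hmemφ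
      ⟨by linarith, le_refl _⟩ h2
    rwa [Real.sin_pi_div_two] at this
  have h22 : Real.sqrt 2 ^ 2 = 2 := Real.sq_sqrt (by norm_num)
  have hr2 : (1.41 : ℝ) < Real.sqrt 2 := by
    nlinarith [h22, Real.sqrt_nonneg 2]
  have hspos : 0 < Real.sin φ := by nlinarith
  have ht1 : (1 : ℝ) / 2 ≤ Real.sin φ ^ 2 := by nlinarith [h22, Real.sqrt_nonneg 2]
  have ht2 : Real.sin φ ^ 2 < 1 := by nlinarith
  have hcos : 0 ≤ Real.cos φ := Real.cos_nonneg_of_mem_Icc hmemφ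
  set s := Real.sin φ
  set u : ℝ := 1 + n * s ^ 2 with hu_def
  have hu : (0 : ℝ) < u := by positivity
  set D := Real.sqrt u with hD_def
  have hD : 0 < D := Real.sqrt_pos.mpr hu
  have hD2 : D ^ 2 = u := Real.sq_sqrt hu.le
  have hSge : ((n : ℝ) - 1) ≤ Ssum n := Ssum_ge n (by omega)
  have hn4 : (4 : ℝ) ≤ (n : ℝ) := by exact_mod_cast hn
  have hSpos : 0 < Ssum n := by linarith
  have hW_ge : Ssum n / 4 ≤ Wpyr n φ := by
    have : 0 ≤ Real.cos φ / D := div_nonneg hcos hD.le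
    rw [Wpyr]; linarith
  have hWpos : 0 < Wpyr n φ := by linarith
  have hderiv : deriv (Wpyr n) φ = -(((n : ℝ) + 1) * s) / (u * D) :=
    (wpyr_hasDerivAt n φ).deriv
  have hw : (0 : ℝ) ≤ s ^ 2 - 1 / 2 := by linarith
  -- key inequality
  have key : ((n : ℝ) + 1) * s / (u * D) < Ssum n / 5 := by
    rw [div_lt_div_iff₀ (by positivity) (by norm_num)]
    have hsq : (((n : ℝ) + 1) * s * 5) ^ 2 < (Ssum n * (u * D)) ^ 2 := by
      have expand : (Ssum n * (u * D)) ^ 2 = Ssum n ^ 2 * u ^ 3 := by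
        rw [mul_pow, mul_pow, hD2]; ring
      rw [expand, hu_def]
      rcases eq_or_lt_of_le hn4 with h4 | h4
      · -- n = 4
        have hn4' : n = 4 := by exact_mod_cast h4.symm
        subst hn4'
        rw [Ssum_four]
        push_cast
        have h9 : (14.6 : ℝ) ≤ (1 + 2 * Real.sqrt 2) ^ 2 := by nlinarith [hr2, h22]
        have hcube : (0 : ℝ) < (1 + 4 * s ^ 2) ^ 3 := by positivity
        have hstep : 14.6 * (1 + 4 * s ^ 2) ^ 3 ≤ (1 + 2 * Real.sqrt 2) ^ 2 * (1 + 4 * s ^ 2) ^ 3 :=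
          mul_le_mul_of_nonneg_right h9 hcube.le
        have hmain : ((4 + 1) * s * 5) ^ 2 < 14.6 * (1 + 4 * s ^ 2) ^ 3 := by
          nlinarith [hw, pow_nonneg hw 2, pow_nonneg hw 3]
        linarith
      · have hn5 : (5 : ℝ) ≤ (n : ℝ) := by
          have h : 4 < n := by exact_mod_cast h4
          have : 5 ≤ n := h
          exact_mod_cast this
        rcases eq_or_lt_of_le hn5 with h5 | h5
        · -- n = 5
          have hn5' : n = 5 := by exact_mod_cast h5.symm
          subst hn5'
          push_cast
          have hS4 : (4 : ℝ) ≤ Ssum 5 := by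
            have h := Ssum_ge 5 (by norm_num)
            push_cast at h; linarith
          have hS16 : (16 : ℝ) ≤ Ssum 5 ^ 2 := by nlinarith [hS4]
          have hcube : (0 : ℝ) < (1 + 5 * s ^ 2) ^ 3 := by positivity
          have hstep : 16 * (1 + 5 * s ^ 2) ^ 3 ≤ Ssum 5 ^ 2 * (1 + 5 * s ^ 2) ^ 3 :=
            mul_le_mul_of_nonneg_right hS16 hcube.le
          have hmain : ((5 + 1) * s * 5) ^ 2 < 16 * (1 + 5 * s ^ 2) ^ 3 := by
            nlinarith [hw, pow_nonneg hw 2, pow_nonneg hw 3]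
          linarith
        · -- n ≥ 6
          have hx6 : (6 : ℝ) ≤ (n : ℝ) := by
            have h : 5 < n := by exact_mod_cast h5
            have : 6 ≤ n := h
            exact_mod_cast this
          set x : ℝ := (n : ℝ) with hx_def
          have hy : (0 : ℝ) ≤ x - 6 := by linarith
          have hA : 25 * (x + 1) ^ 2 * s ^ 2 < 25 * (x + 1) ^ 2 := by
            nlinarith [mul_pos (show (0:ℝ) < (x + 1) ^ 2 by positivity) (show (0:ℝ) < 1 - s ^ 2 by linarith)]
          have hB : 25 * (x + 1) ^ 2 ≤ (x - 1) ^ 2 * (1 + x / 2) ^ 3 := by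
            nlinarith [hy, pow_nonneg hy 2, pow_nonneg hy 3, pow_nonneg hy 4, pow_nonneg hy 5]
          have hC : (1 + x / 2) ^ 3 ≤ (1 + x * s ^ 2) ^ 3 := by
            apply pow_le_pow_left₀ (by positivity)
            nlinarith
          have hS2 : (x - 1) ^ 2 ≤ Ssum n ^ 2 := by
            apply pow_le_pow_left₀ (by linarith) hSge
          have h3 : (x - 1) ^ 2 * (1 + x / 2) ^ 3 ≤ (x - 1) ^ 2 * (1 + x * s ^ 2) ^ 3 :=
            mul_le_mul_of_nonneg_left hC (sq_nonneg _)
          have h4' : (x - 1) ^ 2 * (1 + x * s ^ 2) ^ 3 ≤ Ssum n ^ 2 * (1 + x * s ^ 2) ^ 3 :=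
            mul_le_mul_of_nonneg_right hS2 (by positivity)
          calc ((x + 1) * s * 5) ^ 2 = 25 * (x + 1) ^ 2 * s ^ 2 := by ring
            _ < 25 * (x + 1) ^ 2 := hA
            _ ≤ (x - 1) ^ 2 * (1 + x / 2) ^ 3 := hB
            _ ≤ (x - 1) ^ 2 * (1 + x * s ^ 2) ^ 3 := h3
            _ ≤ Ssum n ^ 2 * (1 + x * s ^ 2) ^ 3 := h4'
    have hpos : 0 ≤ Ssum n * (u * D) := by positivity
    exact lt_of_pow_lt_pow_left₀ 2 hpos hsq
  rw [hderiv, abs_div, abs_of_pos hWpos, neg_div, abs_neg,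
    abs_of_pos (by positivity : (0:ℝ) < ((n : ℝ) + 1) * s / (u * D)),
    div_lt_iff₀ hWpos]
  linarith [key, hW_ge]
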